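/- Danskin-type identity: if g(x,y) is continuously differentiable, g(x,·) is μ-strongly convex for each x, and y*(x) is its unique minimizer, then the value function g*(x) = g(x, y*(x)) is differentiable with ∇g*(x) = ∇ₓg(x, y*(x)). -/

import Mathlib

open Set Filter Topology InnerProductSpace

local notation "⟪" x ", " y "⟫" => @inner ℝ _ _ x y

/-- First-order lower bound for a convex function with a gradient. -/
theorem convex_grad_lower {F : Type*} [NormedAddCommGroup F] [InnerProductSpace ℝ F]
    [CompleteSpace F] {f : F → ℝ} (hf : ConvexOn ℝ univ f) {w a : F}
    (h : HasGradientAt f a w) (z : F) : f w + ⟪a, z - w⟫ ≤ f z := by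
  set φ : ℝ → ℝ := fun t => f (w + t • (z - w)) with hφ
  have hl : HasDerivAt (fun t : ℝ => w + t • (z - w)) (z - w) 0 := by
    simpa using ((hasDerivAt_id (0:ℝ)).smul_const (z - w)).const_add w
  have hfd : HasFDerivAt f ((toDual ℝ F) a) (w + (0:ℝ) • (z - w)) := by
    simpa using hasGradientAt_iff_hasFDerivAt.mp h
  have hd : HasDerivAt φ ⟪a, z - w⟫ 0 := by
    have h := hfd.comp_hasDerivAt (x := (0:ℝ)) hl
    simp only [toDual_apply_apply] at h
    exact h
  have hslope : Tendsto (slope φ 0) (𝓝[>] 0) (𝓝 ⟪a, z - w⟫) :=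
    (hasDerivAt_iff_tendsto_slope.mp hd).mono_left
      (nhdsWithin_mono _ (fun t ht => ne_of_gt ht))
  have hev : ∀ᶠ t in 𝓝[>] (0:ℝ), slope φ 0 t ≤ f z - f w := by
    filter_upwards [Ioc_mem_nhdsGT_of_mem (by constructor <;> norm_num : (0:ℝ) ∈ Ico 0 1)]
      with t ht
    have h01 : (0:ℝ) < t := ht.1
    have hconv := hf.2 (mem_univ z) (mem_univ w) ht.1.le (by linarith [ht.2] : (0:ℝ) ≤ 1 - t)
      (by ring)
    have hpt : w + t • (z - w) = t • z + (1 - t) • w := by module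
    have hle : φ t ≤ t * f z + (1 - t) * f w := by
      rw [hφ]; simp only [hpt]; simpa [smul_eq_mul] using hconv
    have hφ0 : φ 0 = f w := by simp [hφ]
    rw [slope_def_field, hφ0]
    rw [sub_zero, div_le_iff₀ h01]
    nlinarith
  have hlim := le_of_tendsto hslope hev
  linarith

/-- Quadratic growth of a strongly convex function at its minimizer. -/
theorem strong_min_growth {F : Type*} [NormedAddCommGroup F] [InnerProductSpace ℝ F]
    {μ : ℝ} {f : F → ℝ} (hf : StrongConvexOn univ μ f) {m : F} (hm : IsMinOn f univ m)
    (z : F) : μ / 4 * ‖z - m‖ ^ 2 ≤ f z - f m := by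
  have h := hf.2 (mem_univ z) (mem_univ m) (by norm_num : (0:ℝ) ≤ 1/2)
    (by norm_num : (0:ℝ) ≤ 1/2) (by norm_num)
  have hmle : f m ≤ f ((1/2 : ℝ) • z + (1/2 : ℝ) • m) := isMinOn_iff.mp hm _ (mem_univ _)
  simp only [smul_eq_mul] at h
  nlinarith [h, hmle]

set_option maxHeartbeats 1000000 in
/-- Danskin-type identity: if `g` is `C¹` jointly, `g(x,·)` is `μ`-strongly convex with unique
minimizer `y*(x)`, then the value function `g*(x) = g(x, y*(x))` is differentiable with
gradient `∇g*(x) = ∇ₓ g(x, y*(x))`. -/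
theorem stmt7 {n r : ℕ} (μ : ℝ)
    (g : EuclideanSpace ℝ (Fin n) → EuclideanSpace ℝ (Fin r) → ℝ)
    (gx : EuclideanSpace ℝ (Fin n) → EuclideanSpace ℝ (Fin r) → EuclideanSpace ℝ (Fin n))
    (ystar : EuclideanSpace ℝ (Fin n) → EuclideanSpace ℝ (Fin r))
    (hμ : 0 < μ)
    (hC1 : ContDiff ℝ 1 (fun p : EuclideanSpace ℝ (Fin n) × EuclideanSpace ℝ (Fin r) =>
      g p.1 p.2))
    (hsc : ∀ x, StrongConvexOn univ μ (g x))
    (hmin : ∀ x, IsMinOn (g x) univ (ystar x))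
    (hgx : ∀ x y, HasGradientAt (fun x' => g x' y) (gx x y) x) :
    ∀ x, HasGradientAt (fun x' => g x' (ystar x')) (gx x (ystar x)) x := by
  intro x0
  have hdG : Differentiable ℝ
      (fun p : EuclideanSpace ℝ (Fin n) × EuclideanSpace ℝ (Fin r) => g p.1 p.2) :=
    hC1.differentiable one_ne_zero
  set G : EuclideanSpace ℝ (Fin n) × EuclideanSpace ℝ (Fin r) → ℝ := fun p => g p.1 p.2
    with hGdef
  set Fd : EuclideanSpace ℝ (Fin n) × EuclideanSpace ℝ (Fin r) →
      (EuclideanSpace ℝ (Fin n) × EuclideanSpace ℝ (Fin r)) →L[ℝ] ℝ :=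
    fun p => fderiv ℝ G p with hFdef
  have hGdiff : ∀ p, HasFDerivAt G (Fd p) p := fun p => (hdG p).hasFDerivAt
  have hFcont : Continuous Fd := hC1.continuous_fderiv one_ne_zero
  set y0 := ystar x0 with hy0def
  set a := gx x0 y0 with hadef
  -- partial x derivative
  have hpx : ∀ x y, HasFDerivAt (fun x' => g x' y)
      ((Fd (x, y)).comp (ContinuousLinearMap.inl ℝ _ _)) x := fun x y =>
    by have h := (hGdiff (x, y)).comp x (hasFDerivAt_prodMk_left (𝕜 := ℝ) x y); exact h
  have hkeyx : ∀ x y, (toDual ℝ _) (gx x y) =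
      (Fd (x, y)).comp (ContinuousLinearMap.inl ℝ _ _) :=
    fun x y => (hasGradientAt_iff_hasFDerivAt.mp (hgx x y)).unique (hpx x y)
  -- norm bounds for composition with inl / inr
  have hninl : ∀ T : (EuclideanSpace ℝ (Fin n) × EuclideanSpace ℝ (Fin r)) →L[ℝ] ℝ,
      ‖T.comp (ContinuousLinearMap.inl ℝ _ _)‖ ≤ ‖T‖ := by
    intro T
    refine ContinuousLinearMap.opNorm_le_bound _ (norm_nonneg T) fun v => ?_
    calc ‖T (v, 0)‖ ≤ ‖T‖ * ‖(v, (0 : EuclideanSpace ℝ (Fin r)))‖ := T.le_opNorm _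
    _ ≤ ‖T‖ * ‖v‖ := by
        apply mul_le_mul_of_nonneg_left _ (norm_nonneg T)
        simp [Prod.norm_def]
  have hninr : ∀ T : (EuclideanSpace ℝ (Fin n) × EuclideanSpace ℝ (Fin r)) →L[ℝ] ℝ,
      ‖T.comp (ContinuousLinearMap.inr ℝ _ _)‖ ≤ ‖T‖ := by
    intro T
    refine ContinuousLinearMap.opNorm_le_bound _ (norm_nonneg T) fun v => ?_
    calc ‖T (0, v)‖ ≤ ‖T‖ * ‖((0 : EuclideanSpace ℝ (Fin n)), v)‖ := T.le_opNorm _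
    _ ≤ ‖T‖ * ‖v‖ := by
        apply mul_le_mul_of_nonneg_left _ (norm_nonneg T)
        simp [Prod.norm_def]
  have hx_est : ∀ x y, ‖gx x y - a‖ ≤ ‖Fd (x, y) - Fd (x0, y0)‖ := by
    intro x y
    have heq : (toDual ℝ _) (gx x y - a) =
        (Fd (x, y) - Fd (x0, y0)).comp (ContinuousLinearMap.inl ℝ _ _) := by
      rw [map_sub, hkeyx x y, hadef, hkeyx x0 y0, ContinuousLinearMap.sub_comp]
    calc ‖gx x y - a‖ = ‖(toDual ℝ _) (gx x y - a)‖ := (LinearIsometryEquiv.norm_map _ _).symm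
    _ = ‖(Fd (x, y) - Fd (x0, y0)).comp (ContinuousLinearMap.inl ℝ _ _)‖ := by rw [heq]
    _ ≤ ‖Fd (x, y) - Fd (x0, y0)‖ := hninl _
  -- partial y derivative
  have hpy : ∀ x y, HasFDerivAt (g x)
      ((Fd (x, y)).comp (ContinuousLinearMap.inr ℝ _ _)) y := fun x y =>
    by have h := (hGdiff (x, y)).comp y (hasFDerivAt_prodMk_right (𝕜 := ℝ) x y); exact h
  have hzero : (Fd (x0, y0)).comp (ContinuousLinearMap.inr ℝ _ _) = 0 :=
    ((hmin x0).isLocalMin univ_mem).hasFDerivAt_eq_zero (hpy x0 y0)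
  -- continuity-type bound for ystar
  have hyb : ∀ x, ‖ystar x - y0‖ ≤ 4 / μ * ‖Fd (x, y0) - Fd (x0, y0)‖ := by
    intro x
    set M := ‖Fd (x, y0) - Fd (x0, y0)‖ with hM
    by_cases hd0 : ‖ystar x - y0‖ = 0
    · rw [hd0]; positivity
    have hdpos : 0 < ‖ystar x - y0‖ := lt_of_le_of_ne (norm_nonneg _) (Ne.symm hd0)
    have hqg : μ / 4 * ‖y0 - ystar x‖ ^ 2 ≤ g x y0 - g x (ystar x) :=
      strong_min_growth (hsc x) (hmin x) y0
    have hga : HasGradientAt (g x)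
        ((toDual ℝ _).symm ((Fd (x, y0)).comp (ContinuousLinearMap.inr ℝ _ _))) y0 :=
      hasFDerivAt_iff_hasGradientAt.mp (hpy x y0)
    have hconv : ConvexOn ℝ univ (g x) :=
      (hsc x).convexOn (fun s => mul_nonneg (by linarith) (sq_nonneg s))
    have hlow := convex_grad_lower hconv hga (ystar x)
    set gyv := (toDual ℝ (EuclideanSpace ℝ (Fin r))).symm
      ((Fd (x, y0)).comp (ContinuousLinearMap.inr ℝ _ _)) with hgyv
    have hgyn : ‖gyv‖ ≤ M := by
      rw [hgyv, LinearIsometryEquiv.norm_map]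
      have heq2 : (Fd (x, y0)).comp (ContinuousLinearMap.inr ℝ _ _) =
          (Fd (x, y0) - Fd (x0, y0)).comp (ContinuousLinearMap.inr ℝ _ _) := by
        rw [ContinuousLinearMap.sub_comp, hzero, sub_zero]
      rw [heq2]; exact hninr _
    have hnn : ‖y0 - ystar x‖ = ‖ystar x - y0‖ := norm_sub_rev _ _
    have hmain : μ / 4 * ‖ystar x - y0‖ ^ 2 ≤ M * ‖ystar x - y0‖ := by
      calc μ / 4 * ‖ystar x - y0‖ ^ 2 = μ / 4 * ‖y0 - ystar x‖ ^ 2 := by rw [hnn]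
      _ ≤ g x y0 - g x (ystar x) := hqg
      _ ≤ -⟪gyv, ystar x - y0⟫ := by linarith [hlow]
      _ ≤ |⟪gyv, ystar x - y0⟫| := neg_le_abs _
      _ ≤ ‖gyv‖ * ‖ystar x - y0‖ := abs_real_inner_le_norm _ _
      _ ≤ M * ‖ystar x - y0‖ := mul_le_mul_of_nonneg_right hgyn (norm_nonneg _)
    rw [div_mul_eq_mul_div, le_div_iff₀ hμ]
    nlinarith [hmain, hdpos]
  -- main estimate
  rw [hasGradientAt_iff_isLittleO, Asymptotics.isLittleO_iff]
  intro c hc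
  obtain ⟨δ, hδpos, hδ⟩ : ∃ δ > 0, ∀ p, dist p (x0, y0) < δ → ‖Fd p - Fd (x0, y0)‖ ≤ c := by
    obtain ⟨δ, hδpos, h⟩ := Metric.continuousAt_iff.mp hFcont.continuousAt c hc
    exact ⟨δ, hδpos, fun p hp => by
      have h2 := h hp; rw [dist_eq_norm] at h2; exact h2.le⟩
  have hyev : ∀ᶠ x in 𝓝 x0, ‖ystar x - y0‖ < δ / 2 := by
    have hcont : Continuous fun x => 4 / μ * ‖Fd (x, y0) - Fd (x0, y0)‖ :=
      continuous_const.mul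
        (((hFcont.comp (continuous_id.prodMk continuous_const)).sub continuous_const).norm)
    have hmem := hcont.continuousAt (x := x0)
      (Iio_mem_nhds (show (fun x => 4 / μ * ‖Fd (x, y0) - Fd (x0, y0)‖) x0 < δ / 2 by
        simp only [sub_self, norm_zero, mul_zero]; exact half_pos hδpos))
    filter_upwards [hmem] with x hx
    exact lt_of_le_of_lt (hyb x) hx
  filter_upwards [hyev, Metric.ball_mem_nhds x0 (half_pos hδpos)] with x hyx hxball
  have key : ∀ y, ‖y - y0‖ < δ / 2 → |g x y - g x0 y - ⟪a, x - x0⟫| ≤ c * ‖x - x0‖ := by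
    intro y hy
    have hsub : segment ℝ x0 x ⊆ Metric.ball x0 (δ / 2) :=
      (convex_ball x0 (δ / 2)).segment_subset (Metric.mem_ball_self (half_pos hδpos)) hxball
    have hseg : ∀ x' ∈ segment ℝ x0 x, ‖gx x' y - a‖ ≤ c := by
      intro x' hx'
      refine le_trans (hx_est x' y) (hδ _ ?_)
      rw [Prod.dist_eq]
      apply max_lt
      · exact lt_trans (hsub hx') (by linarith)
      · rw [dist_eq_norm]; linarith
    set φ : EuclideanSpace ℝ (Fin n) → ℝ := fun x' => g x' y - ⟪a, x'⟫ with hφdef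
    have hder : ∀ x' ∈ segment ℝ x0 x,
        HasFDerivWithinAt φ ((fun x'' => (toDual ℝ _) (gx x'' y - a)) x')
          (segment ℝ x0 x) x' := by
      intro x' _
      have h1 : HasFDerivAt (fun x'' => g x'' y) ((toDual ℝ _) (gx x' y)) x' :=
        hasGradientAt_iff_hasFDerivAt.mp (hgx x' y)
      have h2 : HasFDerivAt (fun x'' : EuclideanSpace ℝ (Fin n) => ⟪a, x''⟫)
          ((toDual ℝ _) a) x' := by
        exact ((toDual ℝ (EuclideanSpace ℝ (Fin n))) a).hasFDerivAt
      have h3 := h1.sub h2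
      simp only [map_sub]
      exact h3.hasFDerivWithinAt
    have hmv := (convex_segment x0 x).norm_image_sub_le_of_norm_hasFDerivWithin_le hder
      (fun x' hx' => by
        rw [LinearIsometryEquiv.norm_map]; exact hseg x' hx')
      (left_mem_segment ℝ x0 x) (right_mem_segment ℝ x0 x)
    have hφeq : φ x - φ x0 = g x y - g x0 y - ⟪a, x - x0⟫ := by
      simp only [hφdef, inner_sub_right]; ring
    rw [← Real.norm_eq_abs, ← hφeq]
    exact hmv
  have hub := key y0 (by simpa using half_pos hδpos)
  have hlb := key (ystar x) hyx
  have m1 : g x (ystar x) ≤ g x y0 := isMinOn_iff.mp (hmin x) y0 (mem_univ _)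
  have m2 : g x0 y0 ≤ g x0 (ystar x) := isMinOn_iff.mp (hmin x0) _ (mem_univ _)
  have hub' := abs_le.mp hub
  have hlb' := abs_le.mp hlb
  rw [Real.norm_eq_abs, abs_le]
  constructor
  · linarith [hlb'.1]
  · linarith [hub'.2]
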